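/- Under the coupled-dynamics setup, let R > 0 satisfy R ≤ (4/27)(1 − ‖A'_{t₀}‖)/(‖H‖³ b_max²) − α. Then for every Δt ∈ ℕ with 0 ≤ Δt ≤ R/α, the maximum deviation in b satisfies ε_b(Δt) ≤ α b_max Δt / (3R − α Δt). -/

import Mathlib

open Matrix Finset

/-- The spectral norm (ℓ²-operator norm) of a real square matrix. -/
noncomputable def specNorm {n : ℕ} (A : Matrix (Fin n) (Fin n) ℝ) : ℝ :=
  ‖Matrix.toEuclideanCLM (𝕜 := ℝ) A‖

/-- The Euclidean norm of a real vector. -/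
noncomputable def evNorm {n : ℕ} (v : Fin n → ℝ) : ℝ :=
  Real.sqrt (∑ i, v i ^ 2)

/-- `ε_A(Δt) = max_{t₀ ≤ τ ≤ t₀+Δt} ‖A_τ − A'_{t₀}‖` (spectral norm). -/
noncomputable def epsA {n : ℕ} (t₀ : ℕ)
    (A A' : ℕ → Matrix (Fin n) (Fin n) ℝ) (Δt : ℕ) : ℝ :=
  (Finset.Icc t₀ (t₀ + Δt)).sup'
    (Finset.nonempty_Icc.mpr (Nat.le_add_right _ _))
    (fun τ => specNorm (A τ - A' t₀))

/-- `ε_b(Δt) = max_{t₀ ≤ τ ≤ t₀+Δt} ‖b_τ − b'_τ‖` (Euclidean norm). -/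
noncomputable def epsB {n : ℕ} (t₀ : ℕ)
    (b b' : ℕ → (Fin n → ℝ)) (Δt : ℕ) : ℝ :=
  (Finset.Icc t₀ (t₀ + Δt)).sup'
    (Finset.nonempty_Icc.mpr (Nat.le_add_right _ _))
    (fun τ => evNorm (b τ - b' τ))

section Helpers

set_option synthInstance.maxHeartbeats 1000000 in
set_option maxHeartbeats 1000000 in
lemma evNorm_eq {n : ℕ} (v : Fin n → ℝ) :
    evNorm v = ‖(WithLp.equiv 2 (Fin n → ℝ)).symm v‖ := by
  rw [EuclideanSpace.norm_eq, evNorm]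
  congr 1
  refine Finset.sum_congr rfl fun i _ => ?_
  rw [WithLp.equiv_symm_apply, PiLp.toLp_apply, Real.norm_eq_abs, sq_abs]

lemma evNorm_nonneg {n : ℕ} (v : Fin n → ℝ) : 0 ≤ evNorm v := by
  rw [evNorm_eq]; exact norm_nonneg _

lemma evNorm_zero {n : ℕ} : evNorm (0 : Fin n → ℝ) = 0 := by
  simp [evNorm]

lemma evNorm_add_le {n : ℕ} (u w : Fin n → ℝ) :
    evNorm (u + w) ≤ evNorm u + evNorm w := by
  rw [evNorm_eq, evNorm_eq, evNorm_eq]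
  have h : (WithLp.equiv 2 (Fin n → ℝ)).symm (u + w)
      = (WithLp.equiv 2 (Fin n → ℝ)).symm u + (WithLp.equiv 2 (Fin n → ℝ)).symm w := rfl
  rw [h]; exact norm_add_le _ _

lemma evNorm_le_sub_add {n : ℕ} (u w : Fin n → ℝ) :
    evNorm u ≤ evNorm (u - w) + evNorm w := by
  have := evNorm_add_le (u - w) w
  simpa using this

lemma specNorm_nonneg {n : ℕ} (A : Matrix (Fin n) (Fin n) ℝ) : 0 ≤ specNorm A :=
  norm_nonneg _

set_option synthInstance.maxHeartbeats 1000000 in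
set_option maxHeartbeats 1000000 in
lemma specNorm_zero {n : ℕ} : specNorm (0 : Matrix (Fin n) (Fin n) ℝ) = 0 := by
  unfold specNorm
  rw [map_zero]
  exact norm_zero

set_option synthInstance.maxHeartbeats 1000000 in
set_option maxHeartbeats 1000000 in
lemma specNorm_neg {n : ℕ} (A : Matrix (Fin n) (Fin n) ℝ) :
    specNorm (-A) = specNorm A := by
  unfold specNorm
  rw [map_neg]
  exact norm_neg _

set_option synthInstance.maxHeartbeats 1000000 in
set_option maxHeartbeats 1000000 in
lemma evNorm_mulVec_le {n : ℕ} (A : Matrix (Fin n) (Fin n) ℝ) (v : Fin n → ℝ) :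
    evNorm (A *ᵥ v) ≤ specNorm A * evNorm v := by
  rw [evNorm_eq, evNorm_eq, specNorm]
  have h : (WithLp.equiv 2 (Fin n → ℝ)).symm (A *ᵥ v)
      = Matrix.toEuclideanCLM (𝕜 := ℝ) A ((WithLp.equiv 2 (Fin n → ℝ)).symm v) := by
    rw [WithLp.equiv_symm_apply, Matrix.toEuclideanCLM_toLp]
  rw [h]
  exact (Matrix.toEuclideanCLM (𝕜 := ℝ) A).le_opNorm _

set_option synthInstance.maxHeartbeats 1000000 in
set_option maxHeartbeats 1000000 in
lemma specNorm_sub_le {n : ℕ} (A B C : Matrix (Fin n) (Fin n) ℝ) :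
    specNorm (A - C) ≤ specNorm (A - B) + specNorm (B - C) := by
  unfold specNorm
  have : Matrix.toEuclideanCLM (𝕜 := ℝ) (A - C) =
      Matrix.toEuclideanCLM (𝕜 := ℝ) (A - B) + Matrix.toEuclideanCLM (𝕜 := ℝ) (B - C) := by
    rw [← map_add]; congr 1; abel
  rw [this]
  exact norm_add_le _ _

set_option synthInstance.maxHeartbeats 1000000 in
set_option maxHeartbeats 1000000 in
lemma specNorm_smul {n : ℕ} (c : ℝ) (A : Matrix (Fin n) (Fin n) ℝ) :
    specNorm (c • A) = |c| * specNorm A := by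
  unfold specNorm
  rw [_root_.map_smul]
  rw [norm_smul c (Matrix.toEuclideanCLM (𝕜 := ℝ) A), Real.norm_eq_abs]

set_option synthInstance.maxHeartbeats 1000000 in
set_option maxHeartbeats 1000000 in
lemma specNorm_mul_le {n : ℕ} (A B : Matrix (Fin n) (Fin n) ℝ) :
    specNorm (A * B) ≤ specNorm A * specNorm B := by
  unfold specNorm
  rw [_root_.map_mul]
  exact norm_mul_le _ _

set_option synthInstance.maxHeartbeats 1000000 in
set_option maxHeartbeats 1000000 in
lemma specNorm_vecMulVec_le {n : ℕ} (u v : Fin n → ℝ) :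
    specNorm (vecMulVec u v) ≤ evNorm u * evNorm v := by
  unfold specNorm
  refine ContinuousLinearMap.opNorm_le_bound _
    (mul_nonneg (evNorm_nonneg u) (evNorm_nonneg v)) fun x => ?_
  have hx : x = (WithLp.equiv 2 (Fin n → ℝ)).symm (WithLp.equiv 2 (Fin n → ℝ) x) := rfl
  rw [hx, WithLp.equiv_symm_apply, Matrix.toEuclideanCLM_toLp, ← WithLp.equiv_symm_apply]
  set y := WithLp.equiv 2 (Fin n → ℝ) x with hy
  have hmv : vecMulVec u v *ᵥ y = (v ⬝ᵥ y) • u := by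
    ext i
    simp only [vecMulVec, Matrix.mulVec, dotProduct, Matrix.of_apply, Pi.smul_apply,
      smul_eq_mul]
    rw [Finset.sum_mul]
    exact Finset.sum_congr rfl fun j _ => by ring
  rw [hmv]
  have h1 : ‖(WithLp.equiv 2 (Fin n → ℝ)).symm ((v ⬝ᵥ y) • u)‖
      = |v ⬝ᵥ y| * ‖(WithLp.equiv 2 (Fin n → ℝ)).symm u‖ := by
    have : (WithLp.equiv 2 (Fin n → ℝ)).symm ((v ⬝ᵥ y) • u)
        = (v ⬝ᵥ y) • (WithLp.equiv 2 (Fin n → ℝ)).symm u := rfl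
    rw [this, norm_smul, Real.norm_eq_abs]
  rw [h1, ← evNorm_eq]
  have hcs : |v ⬝ᵥ y| ≤ evNorm v * ‖x‖ := by
    have : v ⬝ᵥ y = inner ℝ ((WithLp.equiv 2 (Fin n → ℝ)).symm v) x := by
      rw [PiLp.inner_apply]
      simp [dotProduct, WithLp.equiv_symm_apply, RCLike.inner_apply, hy, mul_comm]
    rw [this, evNorm_eq]
    exact abs_real_inner_le_norm _ _
  calc |v ⬝ᵥ y| * evNorm u
      ≤ (evNorm v * ‖x‖) * evNorm u :=
        mul_le_mul_of_nonneg_right hcs (evNorm_nonneg u)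
    _ = evNorm u * evNorm v * ‖x‖ := by ring

end Helpers

set_option maxHeartbeats 4000000 in
set_option synthInstance.maxHeartbeats 1000000 in
/-- Nonlinear-in-time deviation bound over a trajectory of length
`R/α`. -/
theorem lodo_deviation_nonlinear_bound
    (n : ℕ) (hn : 1 ≤ n) (t₀ : ℕ) (α : ℝ) (hα : 0 < α)
    (H : Matrix (Fin n) (Fin n) ℝ) (s : ℕ → (Fin n → ℝ))
    (bmax : ℝ) (hbmax : 0 < bmax)
    (A A' : ℕ → Matrix (Fin n) (Fin n) ℝ) (b b' : ℕ → (Fin n → ℝ))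
    (hb0 : b t₀ = 0)
    (hbrec : ∀ t, t₀ ≤ t → b (t + 1) = A t *ᵥ b t - s t)
    (hArec : ∀ t, t₀ ≤ t →
      A (t + 1) = A t - α • (H * vecMulVec (b (t + 1)) (b t) * H ^ 2))
    (hA'0 : A' t₀ = A t₀) (hb'0 : b' t₀ = 0)
    (hb'rec : ∀ t, t₀ ≤ t → b' (t + 1) = A' t₀ *ᵥ b' t - s t)
    (hA'rec : ∀ t, t₀ ≤ t →
      A' (t + 1) = A' t - α • (H * vecMulVec (b' (t + 1)) (b' t) * H ^ 2))
    (hAnorm : specNorm (A' t₀) < 1)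
    (hb'bound : ∀ t, t₀ ≤ t → evNorm (b' t) ≤ bmax) :
    ∀ R : ℝ, 0 < R →
      R ≤ 4 / 27 * (1 - specNorm (A' t₀)) / (specNorm H ^ 3 * bmax ^ 2) - α →
      ∀ Δt : ℕ, (Δt : ℝ) ≤ R / α →
        epsB t₀ b b' Δt ≤ α * bmax * Δt / (3 * R - α * Δt) := by
  intro R hR hRle Δt hΔt
  set L := specNorm (A' t₀) with hLdef
  have hL0 : 0 ≤ L := specNorm_nonneg _
  have hβ : 0 < 1 - L := by linarith
  set h := specNorm H with hhdef
  have hh0 : 0 ≤ h := specNorm_nonneg _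
  -- h^3 * bmax^2 must be positive
  have hd : 0 < h ^ 3 * bmax ^ 2 := by
    rcases lt_or_eq_of_le hh0 with hhp | hhz
    · positivity
    · exfalso
      rw [← hhz] at hRle
      norm_num at hRle
      linarith
  have hcond : h ^ 3 * bmax ^ 2 * (R + α) ≤ 4 / 27 * (1 - L) := by
    have h1 : R + α ≤ 4 / 27 * (1 - L) / (h ^ 3 * bmax ^ 2) := by linarith
    calc h ^ 3 * bmax ^ 2 * (R + α)
        ≤ h ^ 3 * bmax ^ 2 * (4 / 27 * (1 - L) / (h ^ 3 * bmax ^ 2)) :=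
          mul_le_mul_of_nonneg_left h1 hd.le
      _ = 4 / 27 * (1 - L) := by rw [mul_div_cancel₀ _ hd.ne']
  have hαΔt : α * Δt ≤ R := by
    rw [le_div_iff₀ hα] at hΔt
    linarith [hΔt]
  -- deviation of A from A' t₀
  have hAdev : ∀ k : ℕ, specNorm (A (t₀ + k) - A' t₀)
      ≤ α * h ^ 3 * ∑ j ∈ Finset.range k, evNorm (b (t₀ + j + 1)) * evNorm (b (t₀ + j)) := by
    intro k
    induction k with
    | zero =>
      simp only [Nat.add_zero, Finset.range_zero, Finset.sum_empty, mul_zero]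
      rw [hA'0, sub_self, specNorm_zero]
    | succ k ih =>
      have ht : t₀ ≤ t₀ + k := Nat.le_add_right _ _
      have hstep := hArec (t₀ + k) ht
      have hdiff : A (t₀ + k + 1) - A (t₀ + k)
          = -(α • (H * vecMulVec (b (t₀ + k + 1)) (b (t₀ + k)) * H ^ 2)) := by
        rw [hstep]; abel
      have hM : specNorm (A (t₀ + k + 1) - A (t₀ + k))
          ≤ α * h ^ 3 * (evNorm (b (t₀ + k + 1)) * evNorm (b (t₀ + k))) := by
        rw [hdiff, specNorm_neg, specNorm_smul, abs_of_pos hα]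
        have c1 : specNorm (H * vecMulVec (b (t₀ + k + 1)) (b (t₀ + k)) * H ^ 2)
            ≤ h ^ 3 * (evNorm (b (t₀ + k + 1)) * evNorm (b (t₀ + k))) := by
          have m1 : specNorm (H * vecMulVec (b (t₀ + k + 1)) (b (t₀ + k)) * H ^ 2)
              ≤ specNorm (H * vecMulVec (b (t₀ + k + 1)) (b (t₀ + k))) * specNorm (H ^ 2) :=
            specNorm_mul_le _ _
          have m2 : specNorm (H * vecMulVec (b (t₀ + k + 1)) (b (t₀ + k)))
              ≤ h * specNorm (vecMulVec (b (t₀ + k + 1)) (b (t₀ + k))) := specNorm_mul_le _ _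
          have m3 : specNorm (H ^ 2) ≤ h * h := by
            rw [pow_two]; exact specNorm_mul_le _ _
          have m4 := specNorm_vecMulVec_le (b (t₀ + k + 1)) (b (t₀ + k))
          have e1 := evNorm_nonneg (b (t₀ + k + 1))
          have e2 := evNorm_nonneg (b (t₀ + k))
          have s1 := specNorm_nonneg (vecMulVec (b (t₀ + k + 1)) (b (t₀ + k)))
          have s2 := specNorm_nonneg (H ^ 2)
          have s3 := specNorm_nonneg (H * vecMulVec (b (t₀ + k + 1)) (b (t₀ + k)))
          nlinarith [mul_le_mul m2 m3 s2 (mul_nonneg hh0 s1),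
            mul_le_mul_of_nonneg_right m4 hh0]
        calc α * specNorm (H * vecMulVec (b (t₀ + k + 1)) (b (t₀ + k)) * H ^ 2)
            ≤ α * (h ^ 3 * (evNorm (b (t₀ + k + 1)) * evNorm (b (t₀ + k)))) :=
              mul_le_mul_of_nonneg_left c1 hα.le
          _ = α * h ^ 3 * (evNorm (b (t₀ + k + 1)) * evNorm (b (t₀ + k))) := by ring
      calc specNorm (A (t₀ + (k + 1)) - A' t₀)
          ≤ specNorm (A (t₀ + (k + 1)) - A (t₀ + k)) + specNorm (A (t₀ + k) - A' t₀) :=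
            specNorm_sub_le _ _ _
        _ ≤ α * h ^ 3 * (evNorm (b (t₀ + k + 1)) * evNorm (b (t₀ + k)))
            + α * h ^ 3 * ∑ j ∈ Finset.range k, evNorm (b (t₀ + j + 1)) * evNorm (b (t₀ + j)) := by
            have : t₀ + (k + 1) = t₀ + k + 1 := by omega
            rw [this]
            exact add_le_add hM ih
        _ = α * h ^ 3 * ∑ j ∈ Finset.range (k + 1),
              evNorm (b (t₀ + j + 1)) * evNorm (b (t₀ + j)) := by
            rw [Finset.sum_range_succ]; ring
  -- recursion for the deviation of b
  have hbdev : ∀ k : ℕ, evNorm (b (t₀ + k + 1) - b' (t₀ + k + 1))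
      ≤ L * evNorm (b (t₀ + k) - b' (t₀ + k))
        + specNorm (A (t₀ + k) - A' t₀) * evNorm (b (t₀ + k)) := by
    intro k
    have ht : t₀ ≤ t₀ + k := Nat.le_add_right _ _
    have hid : b (t₀ + k + 1) - b' (t₀ + k + 1)
        = A' t₀ *ᵥ (b (t₀ + k) - b' (t₀ + k)) + (A (t₀ + k) - A' t₀) *ᵥ b (t₀ + k) := by
      rw [hbrec _ ht, hb'rec _ ht, Matrix.mulVec_sub, Matrix.sub_mulVec]
      abel
    rw [hid]
    calc evNorm (A' t₀ *ᵥ (b (t₀ + k) - b' (t₀ + k)) + (A (t₀ + k) - A' t₀) *ᵥ b (t₀ + k))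
        ≤ evNorm (A' t₀ *ᵥ (b (t₀ + k) - b' (t₀ + k)))
          + evNorm ((A (t₀ + k) - A' t₀) *ᵥ b (t₀ + k)) := evNorm_add_le _ _
      _ ≤ L * evNorm (b (t₀ + k) - b' (t₀ + k))
          + specNorm (A (t₀ + k) - A' t₀) * evNorm (b (t₀ + k)) :=
          add_le_add (evNorm_mulVec_le _ _) (evNorm_mulVec_le _ _)
  -- main induction
  have key : ∀ k : ℕ, α * k ≤ R →
      evNorm (b (t₀ + k) - b' (t₀ + k)) ≤ α * bmax * k / (3 * R - α * k) := by
    intro k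
    induction k using Nat.strong_induction_on with
    | _ k ih =>
      rcases k with _ | k
      · intro _
        simp only [Nat.add_zero, Nat.cast_zero, mul_zero, zero_div, hb0, hb'0, sub_self]
        rw [evNorm_zero]
      · intro hk1
        push_cast at hk1 ⊢
        have hk0 : (0 : ℝ) ≤ (k : ℝ) := Nat.cast_nonneg k
        have hαk : α * k ≤ R - α := by nlinarith
        have hD1 : 0 < 3 * R - α * k := by nlinarith
        have hD2 : 0 < 3 * R - α * (k + 1) := by nlinarith
        -- norm bound on b along the trajectory
        have hbn : ∀ j : ℕ, j ≤ k →
            evNorm (b (t₀ + j)) ≤ 3 * R * bmax / (3 * R - α * j) := by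
          intro j hj
          have hjk : (j : ℝ) ≤ (k : ℝ) := Nat.cast_le.mpr hj
          have hαj : α * j ≤ R := by nlinarith
          have hDj : 0 < 3 * R - α * j := by nlinarith
          have hdj := ih j (by omega) hαj
          have htri := evNorm_le_sub_add (b (t₀ + j)) (b' (t₀ + j))
          have hb'j := hb'bound (t₀ + j) (Nat.le_add_right _ _)
          have heq : α * bmax * j / (3 * R - α * j) + bmax
              = 3 * R * bmax / (3 * R - α * j) := by
            have ne1 : (3 * R - α * (j:ℝ)) ≠ 0 := ne_of_gt hDj
            field_simp
            ring
          linarith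
        rcases Nat.eq_zero_or_pos k with rfl | hkpos
        · -- one step from the start: deviation is exactly 0
          have hzero : b (t₀ + 0 + 1) - b' (t₀ + 0 + 1) = 0 := by
            simp only [Nat.add_zero]
            rw [hbrec _ le_rfl, hb'rec _ le_rfl, hb0, hb'0, hA'0]
            simp [Matrix.mulVec_zero]
          rw [show t₀ + 1 = t₀ + 0 + 1 by omega, hzero, evNorm_zero]
          push_cast
          have h01 : 0 < 3 * R - α * (0 + 1) := by nlinarith
          exact div_nonneg (by positivity) h01.le
        · have hk1' : (1 : ℝ) ≤ (k : ℝ) := by exact_mod_cast hkpos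
          have h2α : 2 * α ≤ R := by nlinarith
          have h3Rα : 0 < 3 * R - α := by nlinarith
          have hRα : 0 < R + α := by linarith
          -- bound on the sum via telescoping
          set w : ℕ → ℝ := fun j => (9 * R ^ 2 * bmax ^ 2 / α) * (1 / (3 * R - α * (j + 1)))
            with hwdef
          have hterm : ∀ j ∈ Finset.range k,
              evNorm (b (t₀ + j + 1)) * evNorm (b (t₀ + j)) ≤ w (j + 1) - w j := by
            intro j hjr
            have hjlt : j < k := Finset.mem_range.mp hjr
            have hj1 : (j : ℝ) + 1 ≤ (k : ℝ) := by exact_mod_cast Nat.succ_le_of_lt hjlt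
            have p1 : 0 < 3 * R - α * ((j:ℝ) + 2) := by
              nlinarith [mul_le_mul_of_nonneg_left
                (show (j:ℝ) + 2 ≤ (k:ℝ) + 1 by linarith) hα.le]
            have p2 : 0 < 3 * R - α * ((j:ℝ) + 1) := by nlinarith
            have p3 : 0 < 3 * R - α * (j:ℝ) := by nlinarith
            have hb1' : evNorm (b (t₀ + j + 1)) ≤ 3 * R * bmax / (3 * R - α * ((j:ℝ) + 1)) := by
              have h := hbn (j + 1) hjlt
              push_cast at h
              rw [show t₀ + j + 1 = t₀ + (j + 1) by omega]
              exact h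
            have hb2 : evNorm (b (t₀ + j)) ≤ 3 * R * bmax / (3 * R - α * (j:ℝ)) :=
              hbn j hjlt.le
            have hwdiff : w (j + 1) - w j
                = 9 * R ^ 2 * bmax ^ 2
                  / ((3 * R - α * ((j:ℝ) + 1)) * (3 * R - α * ((j:ℝ) + 2))) := by
              simp only [hwdef]
              push_cast
              have ne1 : (3 * R - α * ((j:ℝ) + 1)) ≠ 0 := ne_of_gt p2
              have ne2 : (3 * R - α * ((j:ℝ) + 1 + 1)) ≠ 0 := by
                intro hc; apply ne_of_gt p1; linarith [hc]
              have neα : α ≠ 0 := ne_of_gt hα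
              have ne3 : (3 * R - α * ((j:ℝ) + 2)) ≠ 0 := by ring_nf at ne2 ⊢; exact ne2
              rw [mul_one_div, mul_one_div, div_div, div_div, div_sub_div _ _ (mul_ne_zero neα ne2) (mul_ne_zero neα ne1), div_eq_div_iff (mul_ne_zero (mul_ne_zero neα ne2) (mul_ne_zero neα ne1)) (mul_ne_zero ne1 ne3)]
              ring
            have hprod : evNorm (b (t₀ + j + 1)) * evNorm (b (t₀ + j))
                ≤ (3 * R * bmax / (3 * R - α * ((j:ℝ) + 1)))
                  * (3 * R * bmax / (3 * R - α * (j:ℝ))) :=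
              mul_le_mul hb1' hb2 (evNorm_nonneg _) (by positivity)
            rw [hwdiff]
            calc evNorm (b (t₀ + j + 1)) * evNorm (b (t₀ + j))
                ≤ (3 * R * bmax / (3 * R - α * ((j:ℝ) + 1)))
                  * (3 * R * bmax / (3 * R - α * (j:ℝ))) := hprod
              _ = (3 * R * bmax) * (3 * R * bmax)
                  / ((3 * R - α * ((j:ℝ) + 1)) * (3 * R - α * (j:ℝ))) :=
                  div_mul_div_comm _ _ _ _
              _ ≤ 9 * R ^ 2 * bmax ^ 2
                  / ((3 * R - α * ((j:ℝ) + 1)) * (3 * R - α * ((j:ℝ) + 2))) := by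
                  rw [div_le_div_iff₀ (mul_pos p2 p3) (mul_pos p2 p1)]
                  nlinarith [mul_nonneg (mul_nonneg
                    (show (0:ℝ) ≤ 9 * R ^ 2 * bmax ^ 2 by positivity) p2.le)
                    (show (0:ℝ) ≤ (3 * R - α * (j:ℝ)) - (3 * R - α * ((j:ℝ) + 2)) by nlinarith)]
          have htele : ∑ j ∈ Finset.range k, (w (j + 1) - w j) = w k - w 0 :=
            Finset.sum_range_sub w k
          have hwk : w k - w 0 ≤ 9 * R ^ 2 * bmax ^ 2 * k
              / ((3 * R - α * ((k:ℝ) + 1)) * (3 * R - α)) := by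
            have heqw : w k - w 0 = 9 * R ^ 2 * bmax ^ 2 * k
                / ((3 * R - α * ((k:ℝ) + 1)) * (3 * R - α)) := by
              simp only [hwdef]
              push_cast
              have ne1 : (3 * R - α * ((k:ℝ) + 1)) ≠ 0 := ne_of_gt hD2
              have ne2 : (3 * R - α * ((0:ℝ) + 1)) ≠ 0 := by
                intro hc; apply ne_of_gt h3Rα; linarith [hc]
              have neα : α ≠ 0 := ne_of_gt hα
              have ne3 : (3 * R - α) ≠ 0 := by simpa using ne2
              rw [mul_one_div, mul_one_div, div_div, div_div, div_sub_div _ _ (mul_ne_zero neα ne1) (mul_ne_zero neα ne2), div_eq_div_iff (mul_ne_zero (mul_ne_zero neα ne1) (mul_ne_zero neα ne2)) (mul_ne_zero ne1 ne3)]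
              ring
            exact heqw.le
          have hS : ∑ j ∈ Finset.range k, evNorm (b (t₀ + j + 1)) * evNorm (b (t₀ + j))
              ≤ 9 * R ^ 2 * bmax ^ 2 * k / ((3 * R - α * (k + 1)) * (3 * R - α)) := by
            calc ∑ j ∈ Finset.range k, evNorm (b (t₀ + j + 1)) * evNorm (b (t₀ + j))
                ≤ ∑ j ∈ Finset.range k, (w (j + 1) - w j) := Finset.sum_le_sum hterm
              _ = w k - w 0 := htele
              _ ≤ _ := hwk
          -- bound on A deviation
          have hAk : specNorm (A (t₀ + k) - A' t₀)
              ≤ 9 * α * h ^ 3 * R ^ 2 * bmax ^ 2 * k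
                / ((3 * R - α * (k + 1)) * (3 * R - α)) := by
            calc specNorm (A (t₀ + k) - A' t₀)
                ≤ α * h ^ 3 * ∑ j ∈ Finset.range k,
                    evNorm (b (t₀ + j + 1)) * evNorm (b (t₀ + j)) := hAdev k
              _ ≤ α * h ^ 3 * (9 * R ^ 2 * bmax ^ 2 * k
                    / ((3 * R - α * (k + 1)) * (3 * R - α))) :=
                  mul_le_mul_of_nonneg_left hS (by positivity)
              _ = 9 * α * h ^ 3 * R ^ 2 * bmax ^ 2 * k
                    / ((3 * R - α * (k + 1)) * (3 * R - α)) := by ring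
          -- main inequality
          have hek := ih k (by omega) (by nlinarith)
          have hbk := hbn k le_rfl
          have hrec := hbdev k
          have hAnn := specNorm_nonneg (A (t₀ + k) - A' t₀)
          have hbnn := evNorm_nonneg (b (t₀ + k))
          have hebig : evNorm (b (t₀ + k + 1) - b' (t₀ + k + 1))
              ≤ L * (α * bmax * k / (3 * R - α * k))
                + (9 * α * h ^ 3 * R ^ 2 * bmax ^ 2 * k
                    / ((3 * R - α * (k + 1)) * (3 * R - α)))
                  * (3 * R * bmax / (3 * R - α * k)) := by
            have t1 : L * evNorm (b (t₀ + k) - b' (t₀ + k))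
                ≤ L * (α * bmax * k / (3 * R - α * k)) :=
              mul_le_mul_of_nonneg_left hek hL0
            have t2 : specNorm (A (t₀ + k) - A' t₀) * evNorm (b (t₀ + k))
                ≤ (9 * α * h ^ 3 * R ^ 2 * bmax ^ 2 * k
                    / ((3 * R - α * (k + 1)) * (3 * R - α)))
                  * (3 * R * bmax / (3 * R - α * k)) :=
              mul_le_mul hAk hbk hbnn (by positivity)
            linarith
          -- key algebraic estimate
          have h4 : 4 * R ^ 3 ≤ (R + α) * ((3 * R - α * (k + 1)) * (3 * R - α)) := by
            have l1 : R ≤ R + α := by linarith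
            have l2 : 2 * R ≤ 3 * R - α * (k + 1) := by nlinarith
            have l3 : 2 * R ≤ 3 * R - α := by linarith
            have m1 : (2 * R) * (2 * R) ≤ (3 * R - α * (k + 1)) * (3 * R - α) :=
              mul_le_mul l2 l3 (by linarith) (by linarith)
            have m2 : R * ((2 * R) * (2 * R))
                ≤ (R + α) * ((3 * R - α * (k + 1)) * (3 * R - α)) :=
              mul_le_mul l1 m1 (by nlinarith) (by linarith)
            nlinarith [m2]
          have ineqA : 27 * h ^ 3 * R ^ 3 * bmax ^ 2
              ≤ (1 - L) * ((3 * R - α * (k + 1)) * (3 * R - α)) := by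
            have i1 : 27 * h ^ 3 * R ^ 3 * bmax ^ 2 * (R + α)
                ≤ (1 - L) * ((3 * R - α * (k + 1)) * (3 * R - α)) * (R + α) := by
              have a1 : h ^ 3 * bmax ^ 2 * (R + α) * (27 * R ^ 3)
                  ≤ 4 / 27 * (1 - L) * (27 * R ^ 3) :=
                mul_le_mul_of_nonneg_right hcond (by positivity)
              have a2 : (1 - L) * (4 * R ^ 3)
                  ≤ (1 - L) * ((R + α) * ((3 * R - α * (k + 1)) * (3 * R - α))) :=
                mul_le_mul_of_nonneg_left h4 hβ.le
              nlinarith [a1, a2]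
            exact le_of_mul_le_mul_right (by linarith [i1]) hRα
          -- second term is at most (1 - L) * f k
          have hQ : (9 * α * h ^ 3 * R ^ 2 * bmax ^ 2 * k
                / ((3 * R - α * (k + 1)) * (3 * R - α)))
              * (3 * R * bmax / (3 * R - α * k))
              ≤ (1 - L) * (α * bmax * k / (3 * R - α * k)) := by
            have heq3 : (9 * α * h ^ 3 * R ^ 2 * bmax ^ 2 * k
                  / ((3 * R - α * (k + 1)) * (3 * R - α)))
                * (3 * R * bmax / (3 * R - α * k))
                = (27 * h ^ 3 * R ^ 3 * bmax ^ 2) * (α * bmax * k)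
                  / (((3 * R - α * (k + 1)) * (3 * R - α)) * (3 * R - α * k)) := by
              field_simp
              ring
            have heq4 : (1 - L) * (α * bmax * k / (3 * R - α * k))
                = (1 - L) * (α * bmax * k) / (3 * R - α * k) := by ring
            rw [heq3, heq4, div_le_div_iff₀ (by positivity) hD1]
            have hnn : (0 : ℝ) ≤ α * bmax * k * (3 * R - α * k) := by positivity
            nlinarith [mul_le_mul_of_nonneg_right ineqA hnn]
          -- conclude
          have hmono : α * bmax * k / (3 * R - α * k)
              ≤ α * bmax * (k + 1) / (3 * R - α * (k + 1)) := by
            rw [div_le_div_iff₀ hD1 hD2]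
            nlinarith [mul_pos (mul_pos hα hbmax) hR]
          calc evNorm (b (t₀ + (k + 1)) - b' (t₀ + (k + 1)))
              = evNorm (b (t₀ + k + 1) - b' (t₀ + k + 1)) := by rw [show t₀ + (k+1) = t₀ + k + 1 by omega]
            _ ≤ L * (α * bmax * k / (3 * R - α * k))
                + (9 * α * h ^ 3 * R ^ 2 * bmax ^ 2 * k
                    / ((3 * R - α * (k + 1)) * (3 * R - α)))
                  * (3 * R * bmax / (3 * R - α * k)) := hebig
            _ ≤ L * (α * bmax * k / (3 * R - α * k))
                + (1 - L) * (α * bmax * k / (3 * R - α * k)) := by linarith [hQ]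
            _ = α * bmax * k / (3 * R - α * k) := by ring
            _ ≤ α * bmax * (k + 1) / (3 * R - α * (k + 1)) := hmono
  -- conclude from `key`
  have hD : 0 < 3 * R - α * Δt := by nlinarith
  refine Finset.sup'_le _ _ fun τ hτ => ?_
  rw [Finset.mem_Icc] at hτ
  obtain ⟨h1, h2⟩ := hτ
  obtain ⟨j, rfl⟩ : ∃ j, τ = t₀ + j := ⟨τ - t₀, by omega⟩
  have hjΔ : j ≤ Δt := by omega
  have hjΔ' : (j : ℝ) ≤ (Δt : ℝ) := Nat.cast_le.mpr hjΔ
  have hαj : α * j ≤ R := by nlinarith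
  have hDj : 0 < 3 * R - α * j := by nlinarith
  calc evNorm (b (t₀ + j) - b' (t₀ + j))
      ≤ α * bmax * j / (3 * R - α * j) := key j hαj
    _ ≤ α * bmax * Δt / (3 * R - α * Δt) := by
        rw [div_le_div_iff₀ hDj hD]
        nlinarith [mul_nonneg (mul_nonneg (mul_nonneg hα.le hbmax.le) hR.le)
          (sub_nonneg.mpr hjΔ')]
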